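/- Let a < b be reals, let δ > 0, η > 0, C₁ ≥ 0, C₂ ≥ 0 with C₂ η < 2 and b − a ≤ η δ. Let g, h : [a,b] → ℝ be continuous functions with g ≥ 0 and h ≥ δ on [a,b], such that for all u, u' ∈ [a,b]: |g(u) − g(u')| ≤ C₁ |h(u) − h(u')| and |h(u) − h(u')| ≤ C₂ |u − u'|. Then for every u' ∈ [a,b]: (∫_a^b g) / (∫_a^b h) ≤ (g(u')/h(u')) · 1/(1 − C₂η/2) + (C₁C₂η/2)/(1 − C₂η/2). -/

import Mathlib

private lemma abs_sub_integral (a b c : ℝ) (h1 : a ≤ c) (h2 : c ≤ b) :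
    ∫ u in a..b, |u - c| = ((c - a) ^ 2 + (b - c) ^ 2) / 2 := by
  have hcont : Continuous fun u : ℝ => |u - c| :=
    continuous_abs.comp (continuous_id.sub continuous_const)
  have hi1 : IntervalIntegrable (fun u : ℝ => |u - c|) MeasureTheory.volume a c :=
    hcont.intervalIntegrable _ _
  have hi2 : IntervalIntegrable (fun u : ℝ => |u - c|) MeasureTheory.volume c b :=
    hcont.intervalIntegrable _ _
  rw [← intervalIntegral.integral_add_adjacent_intervals hi1 hi2]
  have e1 : ∫ u in a..c, |u - c| = ∫ u in a..c, (c - u) := by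
    apply intervalIntegral.integral_congr
    intro u hu
    rw [Set.uIcc_of_le h1] at hu
    have := hu.2
    simp only [abs_sub_comm, abs_of_nonneg (by linarith : (0:ℝ) ≤ c - u)]
  have e2 : ∫ u in c..b, |u - c| = ∫ u in c..b, (u - c) := by
    apply intervalIntegral.integral_congr
    intro u hu
    rw [Set.uIcc_of_le h2] at hu
    have := hu.1
    simp [abs_of_nonneg (by linarith : (0:ℝ) ≤ u - c)]
  rw [e1, e2]
  have i1 : IntervalIntegrable (fun u : ℝ => u) MeasureTheory.volume a c :=
    (continuous_id).intervalIntegrable _ _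
  have i2 : IntervalIntegrable (fun u : ℝ => u) MeasureTheory.volume c b :=
    (continuous_id).intervalIntegrable _ _
  rw [intervalIntegral.integral_sub (intervalIntegrable_const) i1,
      intervalIntegral.integral_sub i2 (intervalIntegrable_const)]
  simp [integral_id]
  ring

set_option maxHeartbeats 1000000 in
/-- Discretization lemma, upper bound: under the coupled Lipschitz conditions
and `h ≥ δ`, on an interval of length at most `η δ`, the ratio of integrals is
bounded above in terms of any pointwise ratio `g u' / h u'`. -/
theorem stmt_15 (a b : ℝ) (hab : a < b) (δ η C₁ C₂ : ℝ)
    (hδ : 0 < δ) (hη : 0 < η) (hC₁ : 0 ≤ C₁) (hC₂ : 0 ≤ C₂)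
    (hsmall : C₂ * η < 2) (hlen : b - a ≤ η * δ)
    (g h : ℝ → ℝ)
    (hg : ContinuousOn g (Set.Icc a b)) (hh : ContinuousOn h (Set.Icc a b))
    (hg0 : ∀ u ∈ Set.Icc a b, 0 ≤ g u) (hhδ : ∀ u ∈ Set.Icc a b, δ ≤ h u)
    (hLip1 : ∀ u ∈ Set.Icc a b, ∀ u' ∈ Set.Icc a b, |g u - g u'| ≤ C₁ * |h u - h u'|)
    (hLip2 : ∀ u ∈ Set.Icc a b, ∀ u' ∈ Set.Icc a b, |h u - h u'| ≤ C₂ * |u - u'|) :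
    ∀ u' ∈ Set.Icc a b,
      (∫ u in a..b, g u) / (∫ u in a..b, h u)
        ≤ (g u' / h u') * (1 / (1 - C₂ * η / 2))
          + (C₁ * C₂ * η / 2) / (1 - C₂ * η / 2) := by
  intro u' hu'
  obtain ⟨hau', hu'b⟩ := hu'
  have hab' : a ≤ b := hab.le
  obtain ⟨L, hLdef⟩ : ∃ x : ℝ, x = b - a := ⟨_, rfl⟩
  obtain ⟨A, hAdef⟩ : ∃ x : ℝ, x = g u' := ⟨_, rfl⟩
  obtain ⟨B, hBdef⟩ : ∃ x : ℝ, x = h u' := ⟨_, rfl⟩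
  obtain ⟨K, hKdef⟩ : ∃ x : ℝ, x = ((u' - a) ^ 2 + (b - u') ^ 2) / 2 := ⟨_, rfl⟩
  have hL0 : 0 < L := by rw [hLdef]; linarith
  have hLδ : L ≤ η * δ := by rw [hLdef]; exact hlen
  have hBδ : δ ≤ B := by rw [hBdef]; exact hhδ u' ⟨hau', hu'b⟩
  have hB0 : 0 < B := lt_of_lt_of_le hδ hBδ
  have hA0 : 0 ≤ A := by rw [hAdef]; exact hg0 u' ⟨hau', hu'b⟩
  have hden : 0 < 1 - C₂ * η / 2 := by linarith
  have hKval : ∫ u in a..b, |u - u'| = K := by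
    rw [hKdef]; exact abs_sub_integral a b u' hau' hu'b
  have hK0 : 0 ≤ K := by rw [hKdef]; positivity
  have hKle : K ≤ L ^ 2 / 2 := by
    rw [hKdef, hLdef]
    nlinarith [mul_nonneg (by linarith : (0:ℝ) ≤ u' - a) (by linarith : (0:ℝ) ≤ b - u')]
  have hgi : IntervalIntegrable g MeasureTheory.volume a b :=
    ContinuousOn.intervalIntegrable (by rwa [Set.uIcc_of_le hab'])
  have hhi : IntervalIntegrable h MeasureTheory.volume a b :=
    ContinuousOn.intervalIntegrable (by rwa [Set.uIcc_of_le hab'])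
  have habsc : Continuous fun u : ℝ => |u - u'| :=
    continuous_abs.comp (continuous_id.sub continuous_const)
  have habsi : IntervalIntegrable (fun u : ℝ => |u - u'|) MeasureTheory.volume a b :=
    habsc.intervalIntegrable _ _
  -- upper bound for ∫ g
  have hI1 : (∫ u in a..b, g u) ≤ L * A + C₁ * C₂ * K := by
    have hmono : (∫ u in a..b, g u) ≤ ∫ u in a..b, (A + C₁ * C₂ * |u - u'|) := by
      apply intervalIntegral.integral_mono_on hab' hgi
      · exact (intervalIntegrable_const).add (habsi.const_mul _)
      · intro x hx
        have h1 := hLip1 x hx u' ⟨hau', hu'b⟩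
        have h2 := hLip2 x hx u' ⟨hau', hu'b⟩
        have h3 : C₁ * |h x - h u'| ≤ C₁ * (C₂ * |x - u'|) :=
          mul_le_mul_of_nonneg_left h2 hC₁
        have h4 := le_abs_self (g x - g u')
        rw [hAdef]
        nlinarith
    calc (∫ u in a..b, g u) ≤ ∫ u in a..b, (A + C₁ * C₂ * |u - u'|) := hmono
      _ = L * A + C₁ * C₂ * K := by
          rw [intervalIntegral.integral_add (intervalIntegrable_const) (habsi.const_mul _),
            intervalIntegral.integral_const_mul, hKval, intervalIntegral.integral_const,
            smul_eq_mul, hLdef]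
  -- lower bound for ∫ h
  have hI2 : L * B - C₂ * K ≤ ∫ u in a..b, h u := by
    have hmono : (∫ u in a..b, (B - C₂ * |u - u'|)) ≤ ∫ u in a..b, h u := by
      apply intervalIntegral.integral_mono_on hab'
      · exact (intervalIntegrable_const).sub (habsi.const_mul _)
      · exact hhi
      · intro x hx
        have h2 := hLip2 x hx u' ⟨hau', hu'b⟩
        have h4 := neg_abs_le (h x - h u')
        rw [hBdef]
        nlinarith
    calc L * B - C₂ * K
        = ∫ u in a..b, (B - C₂ * |u - u'|) := by
          rw [intervalIntegral.integral_sub (intervalIntegrable_const) (habsi.const_mul _),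
            intervalIntegral.integral_const_mul, hKval, intervalIntegral.integral_const,
            smul_eq_mul, hLdef]
      _ ≤ ∫ u in a..b, h u := hmono
  have hLB : L ≤ η * B := hLδ.trans (mul_le_mul_of_nonneg_left hBδ hη.le)
  have hK1 : C₁ * C₂ * K ≤ C₁ * C₂ * (L ^ 2 / 2) :=
    mul_le_mul_of_nonneg_left hKle (mul_nonneg hC₁ hC₂)
  have hK2 : C₂ * K ≤ C₂ * (L ^ 2 / 2) := mul_le_mul_of_nonneg_left hKle hC₂
  have key1 : C₁ * C₂ * L * L ≤ C₁ * C₂ * L * (η * B) :=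
    mul_le_mul_of_nonneg_left hLB (by positivity)
  have key2 : C₂ * L * L ≤ C₂ * L * (η * B) :=
    mul_le_mul_of_nonneg_left hLB (by positivity)
  have hNt : (∫ u in a..b, g u) ≤ L * (A + C₁ * C₂ * η * B / 2) := by
    nlinarith [hI1, hK1, key1]
  have hDt : L * (B * (1 - C₂ * η / 2)) ≤ ∫ u in a..b, h u := by
    nlinarith [hI2, hK2, key2]
  have hDtpos : 0 < L * (B * (1 - C₂ * η / 2))  := by positivity
  have hN0 : 0 ≤ ∫ u in a..b, g u :=
    intervalIntegral.integral_nonneg hab' (fun u hu => hg0 u hu)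
  have hratio : (∫ u in a..b, g u) / (∫ u in a..b, h u)
      ≤ (L * (A + C₁ * C₂ * η * B / 2)) / (L * (B * (1 - C₂ * η / 2))) :=
    div_le_div₀ (by positivity) hNt hDtpos hDt
  have hEq : (L * (A + C₁ * C₂ * η * B / 2)) / (L * (B * (1 - C₂ * η / 2)))
      = A / B * (1 / (1 - C₂ * η / 2)) + (C₁ * C₂ * η / 2) / (1 - C₂ * η / 2) := by
    have hLne : L ≠ 0 := ne_of_gt hL0
    have hBne : B ≠ 0 := ne_of_gt hB0
    have hdne : (1 - C₂ * η / 2) ≠ 0 := ne_of_gt hden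
    have h2ne : (2 - C₂ * η) ≠ 0 := ne_of_gt (by linarith)
    have h3ne : B * (2 - C₂ * η) ≠ 0 := mul_ne_zero hBne h2ne
    rw [mul_div_mul_left _ _ hLne]
    field_simp
  rw [← hAdef, ← hBdef]
  calc (∫ u in a..b, g u) / (∫ u in a..b, h u)
      ≤ (L * (A + C₁ * C₂ * η * B / 2)) / (L * (B * (1 - C₂ * η / 2))) := hratio
    _ = A / B * (1 / (1 - C₂ * η / 2)) + (C₁ * C₂ * η / 2) / (1 - C₂ * η / 2) := hEq
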